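/- Let Γ be a smooth map from ℝⁿ to the space of symmetric bilinear maps ℝⁿ × ℝⁿ → ℝⁿ, let x₀ ∈ ℝⁿ, let V be an open neighborhood of 0 in ℝⁿ, and let γ : V × [0,1] → ℝⁿ be smooth such that for each v ∈ V: γ(v,0) = x₀, ∂ₛγ(v,0) = v, and ∂ₛ²γ(v,s) = −Γ(γ(v,s))(∂ₛγ(v,s), ∂ₛγ(v,s)) for all s ∈ [0,1]. Define exp : V → ℝⁿ by exp(v) := γ(v,1). Then for every continuous linear functional ℓ : ℝⁿ → ℝ and every v ∈ ℝⁿ, the third Fréchet derivative of ℓ ∘ exp at 0 satisfies D³(ℓ∘exp)(0)(v,v,v) = ℓ( −(DΓ(x₀)(v))(v,v) + 2·Γ(x₀)(Γ(x₀)(v,v), v) ), where DΓ(x)(w) denotes the Fréchet derivative of x ↦ Γ(x) at x in the direction w. -/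

import Mathlib

open Set Metric

section
variable {F : Type*} [NormedAddCommGroup F] [NormedSpace ℝ F]

lemma aux_iter3 {f f1 f2 f3 : ℝ → F} {a b x : ℝ} (hab : a < b) (hx : x ∈ Set.Icc a b)
    (h1 : ∀ t ∈ Set.Icc a b, HasDerivWithinAt f (f1 t) (Set.Icc a b) t)
    (h2 : ∀ t ∈ Set.Icc a b, HasDerivWithinAt f1 (f2 t) (Set.Icc a b) t)
    (h3 : ∀ t ∈ Set.Icc a b, HasDerivWithinAt f2 (f3 t) (Set.Icc a b) t) :
    iteratedDerivWithin 3 f (Set.Icc a b) x = f3 x := by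
  have hs : UniqueDiffOn ℝ (Set.Icc a b) := uniqueDiffOn_Icc hab
  have e1 : ∀ t ∈ Set.Icc a b, iteratedDerivWithin 1 f (Set.Icc a b) t = f1 t := by
    intro t ht
    rw [iteratedDerivWithin_one]
    exact (h1 t ht).derivWithin (hs t ht)
  have e2 : ∀ t ∈ Set.Icc a b, iteratedDerivWithin 2 f (Set.Icc a b) t = f2 t := by
    intro t ht
    rw [show (2:ℕ) = 1 + 1 from rfl, iteratedDerivWithin_succ,
      derivWithin_congr (fun y hy => e1 y hy) (e1 t ht)]
    exact (h2 t ht).derivWithin (hs t ht)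
  rw [show (3:ℕ) = 2 + 1 from rfl, iteratedDerivWithin_succ,
    derivWithin_congr (fun y hy => e2 y hy) (e2 x hx)]
  exact (h3 x hx).derivWithin (hs x hx)

lemma aux_global {f : ℝ → F} {U : Set ℝ}
    (hU : IsOpen U) {a b x : ℝ} (hab : a < b) (hsub : Set.Icc a b ⊆ U)
    (hf : ContDiffOn ℝ (⊤ : ℕ∞) f U) (hx : x ∈ Set.Icc a b) :
    iteratedDerivWithin 3 f (Set.Icc a b) x = iteratedDeriv 3 f x := by
  have H : HasFTaylorSeriesUpToOn (⊤ : ℕ∞) f (ftaylorSeriesWithin ℝ f U) U :=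
    hf.ftaylorSeriesWithin hU.uniqueDiffOn
  have H2 := (H.mono hsub).eq_iteratedFDerivWithin_of_uniqueDiffOn (m := 3) (by norm_cast)
    (uniqueDiffOn_Icc hab) hx
  rw [iteratedDerivWithin_eq_iteratedFDerivWithin, ← H2, iteratedDeriv_eq_iteratedFDeriv]
  have e : ftaylorSeriesWithin ℝ f U x 3 = iteratedFDeriv ℝ 3 f x :=
    iteratedFDerivWithin_of_isOpen (𝕜 := ℝ) (f := f) 3 hU (hsub hx)
  rw [e]

end

set_option maxHeartbeats 1000000

/-- Third differential of a linear functional composed with the exponential map: for the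
geodesic family `γ(v,s)` with `γ(v,0) = x₀`, `∂ₛγ(v,0) = v`, `∂ₛ²γ = −Γ(γ)(∂ₛγ,∂ₛγ)`, and
`exp(v) := γ(v,1)`, one has
`D³(ℓ∘exp)(0)(v,v,v) = ℓ(−DΓ(x₀)(v)(v,v) + 2·Γ(x₀)(Γ(x₀)(v,v),v))`. -/
theorem statement14 (n : ℕ)
    (Γ : EuclideanSpace ℝ (Fin n) →
      (EuclideanSpace ℝ (Fin n) →L[ℝ] EuclideanSpace ℝ (Fin n) →L[ℝ] EuclideanSpace ℝ (Fin n)))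
    (hΓ : ContDiff ℝ (⊤ : ℕ∞) Γ)
    (hΓsymm : ∀ x u w, Γ x u w = Γ x w u)
    (x₀ : EuclideanSpace ℝ (Fin n))
    (V : Set (EuclideanSpace ℝ (Fin n))) (hV : IsOpen V) (h0V : (0 : EuclideanSpace ℝ (Fin n)) ∈ V)
    (γ dγ : EuclideanSpace ℝ (Fin n) → ℝ → EuclideanSpace ℝ (Fin n))
    (hsmooth : ContDiffOn ℝ (⊤ : ℕ∞) (fun q : EuclideanSpace ℝ (Fin n) × ℝ => γ q.1 q.2)
      (V ×ˢ Set.Icc (0 : ℝ) 1))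
    (hinit : ∀ v ∈ V, γ v 0 = x₀)
    (hvel : ∀ v ∈ V, dγ v 0 = v)
    (hderiv : ∀ v ∈ V, ∀ s ∈ Set.Icc (0 : ℝ) 1,
      HasDerivWithinAt (γ v) (dγ v s) (Set.Icc (0 : ℝ) 1) s)
    (hgeo : ∀ v ∈ V, ∀ s ∈ Set.Icc (0 : ℝ) 1,
      HasDerivWithinAt (dγ v) (-(Γ (γ v s) (dγ v s) (dγ v s))) (Set.Icc (0 : ℝ) 1) s) :
    ∀ ℓ : EuclideanSpace ℝ (Fin n) →L[ℝ] ℝ, ∀ v : EuclideanSpace ℝ (Fin n),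
      iteratedFDeriv ℝ 3 (fun u => ℓ (γ u 1)) 0 ![v, v, v]
        = ℓ (-((fderiv ℝ Γ x₀ v) v v) + (2 : ℝ) • Γ x₀ (Γ x₀ v v) v) := by
  intro ℓ v
  -- smoothness of the exponential-type map on V
  have hγ1 : ContDiffOn ℝ (⊤:ℕ∞) (fun u : EuclideanSpace ℝ (Fin n) => γ u 1) V := by
    have h1 : ContDiffOn ℝ (⊤:ℕ∞) (fun u : EuclideanSpace ℝ (Fin n) => (u, (1:ℝ))) V :=
      (contDiff_id.prodMk contDiff_const).contDiffOn
    exact hsmooth.comp h1 (fun u hu => ⟨hu, by norm_num⟩)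
  have hF : ContDiffOn ℝ (⊤:ℕ∞) (fun u => ℓ (γ u 1)) V :=
    ℓ.contDiff.comp_contDiffOn hγ1
  set g : ℝ →L[ℝ] EuclideanSpace ℝ (Fin n) := (1 : ℝ →L[ℝ] ℝ).smulRight v with hgdef
  have hgapp : ∀ t : ℝ, g t = t • v := fun t => rfl
  set W : Set ℝ := g ⁻¹' V with hWdef
  have hWopen : IsOpen W := hV.preimage g.continuous
  have h0W : (0:ℝ) ∈ W := by
    show g 0 ∈ V
    rw [hgapp, zero_smul]; exact h0V
  obtain ⟨r, hr, hball⟩ := Metric.isOpen_iff.1 hWopen 0 h0W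
  set ε : ℝ := r/2 with hεdef
  have hε : 0 < ε := half_pos hr
  have hIccW : Set.Icc (-ε) ε ⊆ W := by
    intro t ht
    apply hball
    rw [mem_ball_zero_iff, Real.norm_eq_abs, abs_lt]
    constructor
    · linarith [ht.1]
    · linarith [ht.2]
  have hεd : ∀ t ∈ Set.Icc (0:ℝ) ε, t • v ∈ V := by
    intro t ht
    have : t ∈ W := hIccW ⟨le_trans (neg_nonpos.mpr hε.le) ht.1, ht.2⟩
    rw [hWdef] at this
    rw [← hgapp]
    exact this
  have hεv : ε • v ∈ V := hεd ε ⟨hε.le, le_rfl⟩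
  have h0ε : (0:ℝ) ∈ Set.Icc (0:ℝ) ε := ⟨le_rfl, hε.le⟩
  -- the ODE vector field
  set Φ : (EuclideanSpace ℝ (Fin n) × EuclideanSpace ℝ (Fin n)) →
      (EuclideanSpace ℝ (Fin n) × EuclideanSpace ℝ (Fin n)) :=
    fun p => (p.2, -(Γ p.1 p.2 p.2)) with hΦdef
  have hΦc : ContDiff ℝ (⊤:ℕ∞) Φ :=
    contDiff_snd.prodMk ((((hΓ.comp contDiff_fst).clm_apply contDiff_snd).clm_apply contDiff_snd).neg)
  -- uniqueness: scaling property
  have key : ∀ t ∈ Set.Icc (0:ℝ) ε, γ (t • v) 1 = γ (ε • v) (t/ε) := by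
    intro t ht
    set lam : ℝ := t/ε with hlamdef
    have hlam : lam ∈ Set.Icc (0:ℝ) 1 := ⟨div_nonneg ht.1 hε.le, (div_le_one hε).2 ht.2⟩
    have hu : t • v ∈ V := hεd t ht
    have hwV : ε • v ∈ V := hεv
    set fc : ℝ → EuclideanSpace ℝ (Fin n) × EuclideanSpace ℝ (Fin n) :=
      fun s => (γ (t • v) s, dγ (t • v) s) with hfcdef
    set gc : ℝ → EuclideanSpace ℝ (Fin n) × EuclideanSpace ℝ (Fin n) :=
      fun s => (γ (ε • v) (lam*s), lam • dγ (ε • v) (lam*s)) with hgcdef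
    have hmapsTo : MapsTo (fun s => lam*s) (Set.Icc (0:ℝ) 1) (Set.Icc (0:ℝ) 1) :=
      fun s hs => ⟨mul_nonneg hlam.1 hs.1, mul_le_one₀ hlam.2 hs.1 hs.2⟩
    have hmul : ∀ s : ℝ, HasDerivWithinAt (fun s => lam*s) lam (Set.Icc (0:ℝ) 1) s := fun s => by
      simpa using ((hasDerivAt_id s).const_mul lam).hasDerivWithinAt
    have hfd : ∀ s ∈ Set.Icc (0:ℝ) 1, HasDerivWithinAt fc (Φ (fc s)) (Set.Icc (0:ℝ) 1) s :=
      fun s hs => (hderiv _ hu s hs).prodMk (hgeo _ hu s hs)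
    have hg1 : ∀ s ∈ Set.Icc (0:ℝ) 1, HasDerivWithinAt (fun s => γ (ε • v) (lam*s))
        (lam • dγ (ε • v) (lam*s)) (Set.Icc (0:ℝ) 1) s := fun s hs =>
      HasDerivWithinAt.scomp s (hderiv _ hwV _ (hmapsTo hs)) (hmul s) hmapsTo
    have hg2 : ∀ s ∈ Set.Icc (0:ℝ) 1, HasDerivWithinAt (fun s => lam • dγ (ε • v) (lam*s))
        (lam • lam • -(Γ (γ (ε • v) (lam*s)) (dγ (ε • v) (lam*s)) (dγ (ε • v) (lam*s))))
        (Set.Icc (0:ℝ) 1) s := fun s hs =>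
      (HasDerivWithinAt.scomp s (hgeo _ hwV _ (hmapsTo hs)) (hmul s) hmapsTo).const_smul lam
    have hgd : ∀ s ∈ Set.Icc (0:ℝ) 1, HasDerivWithinAt gc (Φ (gc s)) (Set.Icc (0:ℝ) 1) s := by
      intro s hs
      have h2 := (hg1 s hs).prodMk (hg2 s hs)
      have e : Φ (gc s) = (lam • dγ (ε • v) (lam*s),
          lam • lam • -(Γ (γ (ε • v) (lam*s)) (dγ (ε • v) (lam*s)) (dγ (ε • v) (lam*s)))) := by
        simp only [hΦdef, hgcdef]
        refine Prod.ext rfl ?_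
        simp [map_smul, ContinuousLinearMap.smul_apply, smul_smul, smul_neg]
      rw [e]
      exact h2
    have hfcont : ContinuousOn fc (Set.Icc (0:ℝ) 1) := fun s hs =>
      ((hderiv _ hu s hs).continuousWithinAt).prodMk ((hgeo _ hu s hs).continuousWithinAt)
    have hgcont : ContinuousOn gc (Set.Icc (0:ℝ) 1) := fun s hs =>
      ((hg1 s hs).continuousWithinAt).prodMk ((hg2 s hs).continuousWithinAt)
    obtain ⟨R, hR⟩ := (isBounded_iff_subset_closedBall 0).1
      (((isCompact_Icc.image_of_continuousOn hfcont).union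
        (isCompact_Icc.image_of_continuousOn hgcont)).isBounded)
    obtain ⟨C, hC⟩ := (isCompact_closedBall
      (0 : EuclideanSpace ℝ (Fin n) × EuclideanSpace ℝ (Fin n)) R).exists_bound_of_continuousOn
      ((hΦc.continuous_fderiv (by norm_cast)).continuousOn)
    have hLip : LipschitzOnWith C.toNNReal Φ (closedBall 0 R) := by
      apply Convex.lipschitzOnWith_of_nnnorm_fderiv_le
        (fun x _ => (hΦc.differentiable (by norm_cast)).differentiableAt) ?_ (convex_closedBall _ _)
      intro x hx
      rw [← NNReal.coe_le_coe, coe_nnnorm, Real.coe_toNNReal']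
      exact (hC x hx).trans (le_max_left _ _)
    have hinit0 : fc 0 = gc 0 := by
      simp only [hfcdef, hgcdef, mul_zero]
      rw [hinit _ hu, hinit _ hwV, hvel _ hu, hvel _ hwV]
      refine Prod.ext rfl ?_
      show t • v = lam • ε • v
      rw [smul_smul, hlamdef, div_mul_cancel₀ t hε.ne']
    have huniq := ODE_solution_unique_of_mem_Icc_right
      (v := fun _ p => Φ p) (s := fun _ => closedBall 0 R) (K := C.toNNReal)
      (fun _ _ => hLip) hfcont
      (fun s hs => (hfd s (Ico_subset_Icc_self hs)).mono_of_mem_nhdsWithin (Icc_mem_nhdsGE_of_mem hs))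
      (fun s hs => hR (Or.inl (mem_image_of_mem _ (Ico_subset_Icc_self hs))))
      hgcont
      (fun s hs => (hgd s (Ico_subset_Icc_self hs)).mono_of_mem_nhdsWithin (Icc_mem_nhdsGE_of_mem hs))
      (fun s hs => hR (Or.inr (mem_image_of_mem _ (Ico_subset_Icc_self hs))))
      hinit0
    have h1 := congrArg Prod.fst (huniq ⟨zero_le_one, le_rfl⟩)
    simpa [hfcdef, hgcdef, mul_one] using h1
  -- derivative chain for c(t) = γ (ε•v) (t/ε)
  have hdivmem : ∀ t ∈ Set.Icc (0:ℝ) ε, t/ε ∈ Set.Icc (0:ℝ) 1 := fun t ht =>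
    ⟨div_nonneg ht.1 hε.le, (div_le_one hε).2 ht.2⟩
  have hdivmaps : MapsTo (fun t : ℝ => t/ε) (Set.Icc 0 ε) (Set.Icc 0 1) := fun t ht =>
    hdivmem t ht
  have hdiv : ∀ t : ℝ, HasDerivWithinAt (fun t : ℝ => t/ε) ε⁻¹ (Set.Icc (0:ℝ) ε) t := fun t => by
    simpa [one_div] using ((hasDerivAt_id t).div_const ε).hasDerivWithinAt
  set P : ℝ → EuclideanSpace ℝ (Fin n) := fun t => γ (ε • v) (t/ε) with hPdef
  set D : ℝ → EuclideanSpace ℝ (Fin n) := fun t => dγ (ε • v) (t/ε) with hDdef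
  have hP : ∀ t ∈ Set.Icc (0:ℝ) ε, HasDerivWithinAt P (ε⁻¹ • D t) (Set.Icc 0 ε) t := fun t ht =>
    HasDerivWithinAt.scomp t (hderiv _ hεv _ (hdivmem t ht)) (hdiv t) hdivmaps
  have hD : ∀ t ∈ Set.Icc (0:ℝ) ε, HasDerivWithinAt D (ε⁻¹ • -(Γ (P t) (D t) (D t)))
      (Set.Icc 0 ε) t := fun t ht =>
    HasDerivWithinAt.scomp t (hgeo _ hεv _ (hdivmem t ht)) (hdiv t) hdivmaps
  have hΓdiff : Differentiable ℝ Γ := hΓ.differentiable (by norm_cast)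
  have hΓP : ∀ t ∈ Set.Icc (0:ℝ) ε, HasDerivWithinAt (Γ ∘ P)
      ((fderiv ℝ Γ (P t)) (ε⁻¹ • D t)) (Set.Icc 0 ε) t := fun t ht =>
    HasFDerivAt.comp_hasDerivWithinAt_of_eq (l := Γ) t ((hΓdiff (P t)).hasFDerivAt) (hP t ht) rfl
  set c3 : ℝ → EuclideanSpace ℝ (Fin n) := fun t => ε⁻¹ • ε⁻¹ •
    -(((fderiv ℝ Γ (P t)) (ε⁻¹ • D t) (D t) + Γ (P t) (ε⁻¹ • -(Γ (P t) (D t) (D t)))) (D t)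
      + Γ (P t) (D t) (ε⁻¹ • -(Γ (P t) (D t) (D t)))) with hc3def
  have hiter : iteratedDerivWithin 3 (fun t => ℓ (P t)) (Set.Icc 0 ε) 0 = ℓ (c3 0) := by
    apply aux_iter3 (f1 := fun t => ℓ (ε⁻¹ • D t))
      (f2 := fun t => ℓ (ε⁻¹ • ε⁻¹ • -(Γ (P t) (D t) (D t)))) (f3 := fun t => ℓ (c3 t)) hε h0ε
    · exact fun t ht => ℓ.hasFDerivAt.comp_hasDerivWithinAt t (hP t ht)
    · exact fun t ht => ℓ.hasFDerivAt.comp_hasDerivWithinAt t ((hD t ht).const_smul ε⁻¹)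
    · intro t ht
      have hin : HasDerivWithinAt (fun t => ε⁻¹ • ε⁻¹ • -(Γ (P t) (D t) (D t))) (c3 t)
          (Set.Icc 0 ε) t := by
        have hq := (((hΓP t ht).clm_apply (hD t ht)).clm_apply (hD t ht)).neg
        exact ((hq.const_smul ε⁻¹).const_smul ε⁻¹)
      exact ℓ.hasFDerivAt.comp_hasDerivWithinAt t hin
  -- reduction of the iterated Fréchet derivative to a 1-variable derivative
  have hg0 : g 0 = 0 := by rw [hgapp, zero_smul]
  have hFg : ((fun u => ℓ (γ u 1)) ∘ g) = (fun t : ℝ => ℓ (γ (t • v) 1)) := by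
    funext t; simp [Function.comp, hgapp]
  have step1 : iteratedFDeriv ℝ 3 (fun u => ℓ (γ u 1)) 0 ![v,v,v]
      = iteratedDeriv 3 (fun t : ℝ => ℓ (γ (t • v) 1)) 0 := by
    have e1 : iteratedFDeriv ℝ 3 (fun u => ℓ (γ u 1)) 0
        = iteratedFDerivWithin ℝ 3 (fun u => ℓ (γ u 1)) V 0 :=
      (iteratedFDerivWithin_of_isOpen 3 hV h0V).symm
    have e2 := g.iteratedFDerivWithin_comp_right (f := fun u => ℓ (γ u 1)) hF hV.uniqueDiffOn
      hWopen.uniqueDiffOn (x := (0:ℝ)) (by rw [hg0]; exact h0V) (i := 3) (by norm_cast)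
    have e3 : iteratedFDerivWithin ℝ 3 ((fun u => ℓ (γ u 1)) ∘ g) W 0
        = iteratedFDeriv ℝ 3 ((fun u => ℓ (γ u 1)) ∘ g) 0 :=
      iteratedFDerivWithin_of_isOpen 3 hWopen h0W
    have hg1v : g 1 = v := by rw [hgapp, one_smul]
    have hm : (![v, v, v] : Fin 3 → EuclideanSpace ℝ (Fin n))
        = fun i : Fin 3 => g ((fun _ : Fin 3 => (1:ℝ)) i) := by
      funext i
      fin_cases i <;> simp [hg1v]
    rw [iteratedDeriv_eq_iteratedFDeriv, ← hFg, ← e3, e2, hg0, e1]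
    rw [ContinuousMultilinearMap.compContinuousLinearMap_apply]
    exact congrArg (fun m => iteratedFDerivWithin ℝ 3 (fun u => ℓ (γ u 1)) V 0 m) hm
  have hIcc0W : Set.Icc (0:ℝ) ε ⊆ W := fun t ht =>
    hIccW ⟨le_trans (neg_nonpos.mpr hε.le) ht.1, ht.2⟩
  have hhW : ContDiffOn ℝ (⊤:ℕ∞) (fun t : ℝ => ℓ (γ (t • v) 1)) W := by
    have h2 : ContDiffOn ℝ (⊤:ℕ∞) ((fun u => ℓ (γ u 1)) ∘ g) W :=
      hF.comp (g.contDiff.contDiffOn) (fun t ht => ht)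
    rwa [hFg] at h2
  have step2 : iteratedDeriv 3 (fun t : ℝ => ℓ (γ (t • v) 1)) 0
      = iteratedDerivWithin 3 (fun t : ℝ => ℓ (γ (t • v) 1)) (Set.Icc 0 ε) 0 :=
    (aux_global hWopen hε hIcc0W hhW h0ε).symm
  have hEq : Set.EqOn (fun t : ℝ => ℓ (γ (t • v) 1)) (fun t => ℓ (P t)) (Set.Icc 0 ε) :=
    fun t ht => congrArg ℓ (key t ht)
  have step3 : iteratedDerivWithin 3 (fun t : ℝ => ℓ (γ (t • v) 1)) (Set.Icc 0 ε) 0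
      = iteratedDerivWithin 3 (fun t => ℓ (P t)) (Set.Icc 0 ε) 0 :=
    iteratedDerivWithin_congr hEq h0ε
  -- final computation
  have hP0 : P 0 = x₀ := by rw [hPdef]; simp only [zero_div]; exact hinit _ hεv
  have hD0 : D 0 = ε • v := by rw [hDdef]; simp only [zero_div]; exact hvel _ hεv
  have final : ℓ (c3 0) = ℓ (-((fderiv ℝ Γ x₀ v) v v) + (2:ℝ) • Γ x₀ (Γ x₀ v v) v) := by
    congr 1
    rw [hc3def]
    simp only [hP0, hD0]
    have hsv : ε⁻¹ • (ε • v) = v := by rw [smul_smul, inv_mul_cancel₀ hε.ne', one_smul]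
    rw [hsv]
    simp only [map_smul, map_neg, ContinuousLinearMap.smul_apply, ContinuousLinearMap.neg_apply,
      ContinuousLinearMap.add_apply, smul_neg, neg_neg]
    rw [hΓsymm x₀ v (Γ x₀ v v)]
    match_scalars <;> (field_simp; try ring)
  rw [step1, step2, step3, hiter, final]
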